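/- Let S and A be finite nonempty sets, r : S × A → ℝ a reward function, and p a transition kernel assigning to each (s,a) ∈ S × A a probability vector p(·|s,a) on S (nonnegative entries summing to 1). Suppose J* ∈ ℝ and q* : S × A → ℝ satisfy the average-reward Bellman equation J* + q*(s,a) = r(s,a) + Σ_{s'} p(s'|s,a) v*(s') for all (s,a), where v*(s) := max_{a∈A} q*(s,a). Let 0 ≤ γ < 1 and suppose Q* : S × A → ℝ and V* : S → ℝ satisfy the discounted Bellman equation Q*(s,a) = r(s,a) + γ Σ_{s'} p(s'|s,a) V*(s') and V*(s) = max_{a∈A} Q*(s,a). Then for every s ∈ S, |J* − (1−γ) V*(s)| ≤ (1−γ) · span(v*), where span(f) := max_s f(s) − min_s f(s). -/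

import Mathlib

open Finset

/-- The discounted optimal value function, rescaled by `1 - γ`, is within
`(1 - γ) · span(v*)` of the optimal average reward `J*`. -/
theorem discounted_average_connection
    {S A : Type*} [Fintype S] [Fintype A] [Nonempty S] [Nonempty A]
    (r : S → A → ℝ) (p : S → A → S → ℝ)
    (hp0 : ∀ s a s', 0 ≤ p s a s') (hp1 : ∀ s a, ∑ s', p s a s' = 1)
    (γ : ℝ) (hγ0 : 0 ≤ γ) (hγ1 : γ < 1)
    (Jstar : ℝ) (qstar : S → A → ℝ) (vstar : S → ℝ)
    (hv : ∀ s, vstar s = univ.sup' univ_nonempty (fun a => qstar s a))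
    (hbell : ∀ s a, Jstar + qstar s a = r s a + ∑ s', p s a s' * vstar s')
    (Qstar : S → A → ℝ) (Vstar : S → ℝ)
    (hQ : ∀ s a, Qstar s a = r s a + γ * ∑ s', p s a s' * Vstar s')
    (hV : ∀ s, Vstar s = univ.sup' univ_nonempty (fun a => Qstar s a)) :
    ∀ s, |Jstar - (1 - γ) * Vstar s| ≤
      (1 - γ) * (univ.sup' univ_nonempty vstar - univ.inf' univ_nonempty vstar) := by
  have hγ : (0:ℝ) < 1 - γ := by linarith
  set c : ℝ := Jstar / (1 - γ) with hc
  have hcJ : (1 - γ) * c = Jstar := by rw [hc]; field_simp [hγ.ne']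
  set u : S → ℝ := fun s => Vstar s - c - vstar s with hu
  set M : ℝ := univ.sup' univ_nonempty vstar with hM
  set m : ℝ := univ.inf' univ_nonempty vstar with hm
  set U : ℝ := univ.sup' univ_nonempty u with hU
  set L : ℝ := univ.inf' univ_nonempty u with hL
  have hvM : ∀ s, vstar s ≤ M := fun s => le_sup' _ (mem_univ s)
  have hvm : ∀ s, m ≤ vstar s := fun s => inf'_le _ (mem_univ s)
  have huU : ∀ s, u s ≤ U := fun s => le_sup' _ (mem_univ s)
  have huL : ∀ s, L ≤ u s := fun s => inf'_le _ (mem_univ s)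
  -- key identity: Qstar s a = c + qstar s a + γ * ∑ p u - (1-γ) * ∑ p v*
  have hkey : ∀ s a, Qstar s a = c + qstar s a
      + γ * ∑ s', p s a s' * u s' - (1 - γ) * ∑ s', p s a s' * vstar s' := by
    intro s a
    have h1 := hQ s a
    have h2 := hbell s a
    have h3 := hp1 s a
    have hsum : ∑ s', p s a s' * u s'
        = (∑ s', p s a s' * Vstar s') - c - ∑ s', p s a s' * vstar s' := by
      simp only [hu, mul_sub]
      rw [Finset.sum_sub_distrib, Finset.sum_sub_distrib, ← Finset.sum_mul, h3, one_mul]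
    rw [hsum]; nlinarith [hcJ]
  -- bounds on ∑ p f for f between bounds
  have hsum_le : ∀ (s : S) (a : A) (f : S → ℝ) (B : ℝ), (∀ s', f s' ≤ B) →
      ∑ s', p s a s' * f s' ≤ B := by
    intro s a f B hB
    calc ∑ s', p s a s' * f s' ≤ ∑ s', p s a s' * B :=
          Finset.sum_le_sum fun s' _ => mul_le_mul_of_nonneg_left (hB s') (hp0 s a s')
      _ = B := by rw [← Finset.sum_mul, hp1, one_mul]
  have hle_sum : ∀ (s : S) (a : A) (f : S → ℝ) (B : ℝ), (∀ s', B ≤ f s') →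
      B ≤ ∑ s', p s a s' * f s' := by
    intro s a f B hB
    calc B = ∑ s', p s a s' * B := by rw [← Finset.sum_mul, hp1, one_mul]
      _ ≤ ∑ s', p s a s' * f s' :=
          Finset.sum_le_sum fun s' _ => mul_le_mul_of_nonneg_left (hB s') (hp0 s a s')
  -- upper bound on u
  have hu_ub : ∀ s, u s ≤ γ * U - (1 - γ) * m := by
    intro s
    have hVle : Vstar s ≤ c + vstar s + (γ * U - (1 - γ) * m) := by
      rw [hV s]
      apply Finset.sup'_le
      intro a _
      have hq : qstar s a ≤ vstar s := by
        rw [hv s]; exact le_sup' _ (mem_univ a)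
      have h1 : ∑ s', p s a s' * u s' ≤ U := hsum_le s a u U huU
      have h2 : m ≤ ∑ s', p s a s' * vstar s' := hle_sum s a vstar m hvm
      rw [hkey s a]; nlinarith
    simp only [hu]; linarith
  -- lower bound on u
  have hu_lb : ∀ s, γ * L - (1 - γ) * M ≤ u s := by
    intro s
    obtain ⟨a, -, ha⟩ := Finset.exists_mem_eq_sup' (univ_nonempty (α := A))
      (fun a => qstar s a)
    have hqa : vstar s = qstar s a := by rw [hv s, ha]
    have hQa : Qstar s a ≤ Vstar s := by
      rw [hV s]; exact le_sup' _ (mem_univ a)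
    have h1 : L ≤ ∑ s', p s a s' * u s' := hle_sum s a u L huL
    have h2 : ∑ s', p s a s' * vstar s' ≤ M := hsum_le s a vstar M hvM
    have hk := hkey s a
    simp only [hu]; nlinarith
  -- U ≤ -m and L ≥ -M
  have hUm : U ≤ -m := by
    have : U ≤ γ * U - (1 - γ) * m := by
      apply Finset.sup'_le
      intro s _
      exact hu_ub s
    nlinarith
  have hLM : -M ≤ L := by
    have : γ * L - (1 - γ) * M ≤ L := by
      apply Finset.le_inf'
      intro s _
      exact hu_lb s
    nlinarith
  intro s
  have h1 : u s ≤ -m := le_trans (huU s) hUm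
  have h2 : -M ≤ u s := le_trans hLM (huL s)
  have h3 : Jstar - (1 - γ) * Vstar s = -(1 - γ) * (u s + vstar s) := by
    simp only [hu]; nlinarith [hcJ]
  rw [h3, abs_le]
  constructor <;> nlinarith [hvM s, hvm s]
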